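/- (Theorem 1, Equation (46)) For odd K = 2n+1, θ ∈ (0,1/2) and θ̂ = θ/(1-θ), let L^K(θ) = ∑_{i=n+1}^{K} C(K,i) θ^i (1-θ)^{K-i} - θ̂^K/(1 + θ̂^K). Then lim_{K→∞, K odd} sup_{θ ∈ (0,1/2)} L^K(θ) = 1/2. -/

import Mathlib

open Finset

lemma sum_w (n : ℕ) (p q : ℝ) (h : p + q = 1) :
    ∑ i ∈ range (n+1), (n.choose i : ℝ) * p^i * q^(n-i) = 1 := by
  have h2 := add_pow p q n
  rw [h, one_pow] at h2
  rw [h2]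
  exact Finset.sum_congr rfl fun i _ => by ring

lemma shift (n : ℕ) (p q : ℝ) (f : ℕ → ℝ) :
    ∑ i ∈ range (n+2), ((n+1).choose i : ℝ) * ((i:ℝ) * f i) * p^i * q^(n+1-i)
      = (n+1) * p * ∑ i ∈ range (n+1), (n.choose i : ℝ) * f (i+1) * p^i * q^(n-i) := by
  rw [Finset.sum_range_succ' _ (n+1)]
  simp only [Nat.cast_zero, zero_mul, mul_zero, zero_mul, add_zero, pow_zero]
  rw [Finset.mul_sum]
  refine Finset.sum_congr rfl fun i _ => ?_
  have hc : ((n+1).choose (i+1) : ℝ) * (i+1) = (n+1) * (n.choose i : ℝ) := by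
    have h3 : ((n+1).choose (i+1) * (i+1) : ℕ) = ((n+1) * n.choose i : ℕ) := by
      have := Nat.add_one_mul_choose_eq n i
      simpa [Nat.succ_eq_add_one, mul_comm] using this.symm
    exact_mod_cast h3
  have hsub : n + 1 - (i+1) = n - i := by omega
  rw [hsub]
  have : ((n+1).choose (i+1) : ℝ) * ((i+1 : ℕ) * f (i+1)) * p^(i+1) * q^(n-i)
      = (((n+1).choose (i+1) : ℝ) * (i+1)) * f (i+1) * (p * p^i) * q^(n-i) := by
    push_cast; ring
  rw [this, hc]
  ring

lemma mean_w (n : ℕ) (p q : ℝ) (h : p + q = 1) :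
    ∑ i ∈ range (n+1), (n.choose i : ℝ) * ((i:ℝ) * p^i * q^(n-i)) = n * p := by
  cases n with
  | zero => simp
  | succ m =>
    have h2 := shift m p q (fun _ => 1)
    simp only [mul_one] at h2
    calc ∑ i ∈ range (m+2), ((m+1).choose i : ℝ) * ((i:ℝ) * p^i * q^(m+1-i))
        = ∑ i ∈ range (m+2), ((m+1).choose i : ℝ) * (i:ℝ) * p^i * q^(m+1-i) := by
          exact Finset.sum_congr rfl fun i _ => by ring
      _ = (m+1) * p * ∑ i ∈ range (m+1), (m.choose i : ℝ) * p^i * q^(m-i) := h2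
      _ = (m+1) * p := by rw [sum_w m p q h]; ring
      _ = _ := by push_cast; ring

lemma m2_w (n : ℕ) (p q : ℝ) (h : p + q = 1) :
    ∑ i ∈ range (n+1), (n.choose i : ℝ) * ((i:ℝ) * ((i:ℝ)-1) * p^i * q^(n-i))
      = n * (n-1) * p^2 := by
  cases n with
  | zero => simp
  | succ m =>
    have h2 := shift m p q (fun i => (i:ℝ) - 1)
    calc ∑ i ∈ range (m+2), ((m+1).choose i : ℝ) * ((i:ℝ) * ((i:ℝ)-1) * p^i * q^(m+1-i))
        = ∑ i ∈ range (m+2), ((m+1).choose i : ℝ) * ((i:ℝ) * ((i:ℝ)-1)) * p^i * q^(m+1-i) := by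
          exact Finset.sum_congr rfl fun i _ => by ring
      _ = (m+1) * p * ∑ i ∈ range (m+1), (m.choose i : ℝ) * ((fun i : ℕ => (i:ℝ) - 1) (i+1)) * p^i * q^(m-i) := h2
      _ = (m+1) * p * ∑ i ∈ range (m+1), (m.choose i : ℝ) * ((i:ℝ) * p^i * q^(m-i)) := by
          congr 1; exact Finset.sum_congr rfl fun i _ => by push_cast; ring
      _ = (m+1) * p * (m * p) := by rw [mean_w m p q h]
      _ = _ := by push_cast; ring

lemma var_w (n : ℕ) (p q : ℝ) (h : p + q = 1) :
    ∑ i ∈ range (n+1), (n.choose i : ℝ) * ((2*(i:ℝ) - n)^2 * p^i * q^(n-i))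
      = 4*n*p*q + n^2*(1-2*p)^2 := by
  have e : ∀ i : ℕ, (n.choose i : ℝ) * ((2*(i:ℝ) - n)^2 * p^i * q^(n-i))
      = 4 * ((n.choose i : ℝ) * ((i:ℝ) * ((i:ℝ)-1) * p^i * q^(n-i)))
        + (4 - 4*n) * ((n.choose i : ℝ) * ((i:ℝ) * p^i * q^(n-i)))
        + (n:ℝ)^2 * ((n.choose i : ℝ) * p^i * q^(n-i)) := fun i => by ring
  rw [Finset.sum_congr rfl fun i _ => e i]
  rw [Finset.sum_add_distrib, Finset.sum_add_distrib, ← Finset.mul_sum, ← Finset.mul_sum,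
    ← Finset.mul_sum, m2_w n p q h, mean_w n p q h, sum_w n p q h]
  have hq : q = 1 - p := by linarith
  rw [hq]; ring

lemma abs_dev_le (n : ℕ) (p q : ℝ) (hp : 0 ≤ p) (hq : 0 ≤ q) (h : p + q = 1) :
    ∑ i ∈ range (n+1), (n.choose i : ℝ) * (|2*(i:ℝ) - n| * p^i * q^(n-i))
      ≤ Real.sqrt (4*n*p*q + n^2*(1-2*p)^2) := by
  have hw : ∀ i : ℕ, 0 ≤ (n.choose i : ℝ) * p^i * q^(n-i) := fun i => by positivity
  have cs := Real.sum_mul_le_sqrt_mul_sqrt (range (n+1))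
    (fun i => Real.sqrt ((n.choose i : ℝ) * p^i * q^(n-i)))
    (fun i => Real.sqrt ((n.choose i : ℝ) * p^i * q^(n-i)) * |2*(i:ℝ) - n|)
  have e1 : ∀ i ∈ range (n+1),
      Real.sqrt ((n.choose i : ℝ) * p^i * q^(n-i)) *
        (Real.sqrt ((n.choose i : ℝ) * p^i * q^(n-i)) * |2*(i:ℝ) - n|)
      = (n.choose i : ℝ) * (|2*(i:ℝ) - n| * p^i * q^(n-i)) := by
    intro i _
    rw [← mul_assoc, Real.mul_self_sqrt (hw i)]; ring
  rw [Finset.sum_congr rfl e1] at cs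
  have e2 : ∀ i ∈ range (n+1),
      (Real.sqrt ((n.choose i : ℝ) * p^i * q^(n-i)))^2 = (n.choose i : ℝ) * p^i * q^(n-i) := by
    intro i _; exact Real.sq_sqrt (hw i)
  rw [Finset.sum_congr rfl e2, sum_w n p q h, Real.sqrt_one, one_mul] at cs
  have e3 : ∀ i ∈ range (n+1),
      (Real.sqrt ((n.choose i : ℝ) * p^i * q^(n-i)) * |2*(i:ℝ) - n|)^2
      = (n.choose i : ℝ) * ((2*(i:ℝ) - n)^2 * p^i * q^(n-i)) := by
    intro i _
    rw [mul_pow, Real.sq_sqrt (hw i), sq_abs]; ring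
  rw [Finset.sum_congr rfl e3, var_w n p q h] at cs
  exact cs

lemma head_rev (n : ℕ) (p q : ℝ) :
    ∑ i ∈ range (n+1), ((2*n+1).choose i : ℝ) * p^i * q^(2*n+1-i)
      = ∑ i ∈ Icc (n+1) (2*n+1), ((2*n+1).choose i : ℝ) * p^(2*n+1-i) * q^i := by
  refine Finset.sum_nbij' (fun i => 2*n+1-i) (fun i => 2*n+1-i) ?_ ?_ ?_ ?_ ?_
  · intro a ha; simp only [mem_range] at ha; simp only [mem_Icc]; omega
  · intro a ha; simp only [mem_Icc] at ha; simp only [mem_range]; omega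
  · intro a ha; simp only [mem_range] at ha
    show 2*n+1-(2*n+1-a) = a; omega
  · intro a ha; simp only [mem_Icc] at ha
    show 2*n+1-(2*n+1-a) = a; omega
  · intro a ha
    simp only [mem_range] at ha
    have h1 : (2*n+1).choose (2*n+1-a) = (2*n+1).choose a := by
      exact Nat.choose_symm (by omega)
    have h2 : 2*n+1-(2*n+1-a) = a := by omega
    show _ = ((2*n+1).choose (2*n+1-a) : ℝ) * p^(2*n+1-(2*n+1-a)) * q^(2*n+1-a)
    rw [h1, h2]

lemma sum_split (n : ℕ) (p q : ℝ) (h : p + q = 1) :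
    ∑ i ∈ range (n+1), ((2*n+1).choose i : ℝ) * p^i * q^(2*n+1-i)
      + ∑ i ∈ Icc (n+1) (2*n+1), ((2*n+1).choose i : ℝ) * p^i * q^(2*n+1-i) = 1 := by
  have h1 : Finset.Icc (n+1) (2*n+1) = Finset.Ico (n+1) (2*n+2) := by
    rw [← Finset.Ico_add_one_right_eq_Icc]; rfl
  have h2 : Finset.range (n+1) = Finset.Ico 0 (n+1) := by rw [Finset.range_eq_Ico]
  rw [h1, h2, Finset.sum_Ico_consecutive _ (by omega) (by omega : n+1 ≤ 2*n+2)]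
  rw [← Finset.range_eq_Ico]
  have := sum_w (2*n+1) p q h
  rw [show 2*n+1+1 = 2*n+2 from rfl] at this
  exact this

lemma my_sqrt_add_le (a b : ℝ) (ha : 0 ≤ a) (hb : 0 ≤ b) :
    Real.sqrt (a + b) ≤ Real.sqrt a + Real.sqrt b := by
  have h1 : a + b ≤ (Real.sqrt a + Real.sqrt b)^2 := by
    have := Real.sq_sqrt ha; have := Real.sq_sqrt hb
    have := Real.sqrt_nonneg a; have := Real.sqrt_nonneg b
    nlinarith [mul_nonneg (Real.sqrt_nonneg a) (Real.sqrt_nonneg b)]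
  calc Real.sqrt (a+b) ≤ Real.sqrt ((Real.sqrt a + Real.sqrt b)^2) := Real.sqrt_le_sqrt h1
    _ = Real.sqrt a + Real.sqrt b := Real.sqrt_sq (by positivity)

lemma my_tendsto_sqrt : Filter.Tendsto Real.sqrt Filter.atTop Filter.atTop := by
  rw [Filter.tendsto_atTop_atTop]
  intro b
  refine ⟨b^2, fun a ha => ?_⟩
  calc b ≤ |b| := le_abs_self b
    _ = Real.sqrt (b^2) := (Real.sqrt_sq_eq_abs b).symm
    _ ≤ Real.sqrt a := Real.sqrt_le_sqrt ha

lemma pow_sub_pow_le (p q : ℝ) (hp : 0 ≤ p) (hpq : p ≤ q) (m : ℕ) :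
    q^m - p^m ≤ m * (q - p) * q^(m-1) := by
  have hq : 0 ≤ q := hp.trans hpq
  rw [← geom_sum₂_mul q p m]
  have h1 : ∑ i ∈ range m, q ^ i * p ^ (m - 1 - i) ≤ m * q^(m-1) := by
    calc ∑ i ∈ range m, q ^ i * p ^ (m - 1 - i)
        ≤ ∑ i ∈ range m, q^(m-1) := by
          refine Finset.sum_le_sum fun i hi => ?_
          simp only [mem_range] at hi
          calc q ^ i * p ^ (m-1-i) ≤ q ^ i * q ^ (m-1-i) :=
                mul_le_mul_of_nonneg_left (pow_le_pow_left₀ hp hpq _) (by positivity)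
            _ = q^(m-1) := by rw [← pow_add]; congr 1; omega
      _ = m * q^(m-1) := by rw [Finset.sum_const, card_range, nsmul_eq_mul]
  have h2 : 0 ≤ q - p := by linarith
  calc (∑ i ∈ range m, q ^ i * p ^ (m - 1 - i)) * (q - p)
      ≤ (m * q^(m-1)) * (q - p) := by
        apply mul_le_mul_of_nonneg_right h1 h2
    _ = m * (q - p) * q^(m-1) := by ring

lemma tail_lower (n : ℕ) (ε : ℝ) (hε : 0 < ε) (hε2 : ε < 1/2) :
    1/2 - 2*ε*(Real.sqrt (2*n+1) + 2*(2*n+1)*ε)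
      ≤ ∑ i ∈ Icc (n+1) (2*n+1), ((2*n+1).choose i : ℝ) * (1/2-ε)^i * (1/2+ε)^(2*n+1-i) := by
  set p : ℝ := 1/2 - ε with hpdef
  set q : ℝ := 1/2 + ε with hqdef
  have hp : 0 ≤ p := by rw [hpdef]; linarith
  have hq : 0 ≤ q := by rw [hqdef]; linarith
  have hq2 : 1/2 ≤ q := by rw [hqdef]; linarith
  have hpq : p ≤ q := by rw [hpdef, hqdef]; linarith
  have hqp : q - p = 2*ε := by rw [hpdef, hqdef]; ring
  have hsum : p + q = 1 := by rw [hpdef, hqdef]; ring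
  have step1 : ∀ i ∈ Icc (n+1) (2*n+1),
      ((2*n+1).choose i : ℝ) * p^(2*n+1-i) * q^i - ((2*n+1).choose i : ℝ) * p^i * q^(2*n+1-i)
      ≤ 4*ε*(((2*n+1).choose i : ℝ) * (|2*(i:ℝ) - (2*n+1)| * q^i * p^(2*n+1-i))) := by
    intro i hi
    simp only [mem_Icc] at hi
    set A : ℝ := ((2*n+1).choose i : ℝ) with hA
    have hA0 : 0 ≤ A := by positivity
    set k := 2*n+1-i with hk
    set m := i - k with hm
    have hm1 : 1 ≤ m := by omega
    have e1 : p^i = p^k * p^m := by rw [show i = k + m by omega, pow_add]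
    have e2 : q^i = q^k * q^m := by rw [show i = k + m by omega, pow_add]
    have hmr : (m:ℝ) = 2*(i:ℝ) - (2*n+1) := by
      have h5 : (m + (2*n+1) : ℕ) = 2*i := by omega
      have h6 := congrArg (Nat.cast : ℕ → ℝ) h5
      push_cast at h6
      linarith
    have habs : |2*(i:ℝ) - (2*n+1)| = (m:ℝ) := by
      rw [← hmr, abs_of_nonneg (by positivity)]
    rw [habs]
    have epow : q^i = q^(k+(m-1)) * q := by
      rw [← pow_succ]; congr 1; omega
    have hqi : q^(k+(m-1)) ≤ 2 * q^i := by
      nlinarith [pow_nonneg hq (k+(m-1))]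
    calc A * p^k * q^i - A * p^i * q^k
        = (A * (p^k * q^k)) * (q^m - p^m) := by rw [e1, e2]; ring
      _ ≤ (A * (p^k * q^k)) * ((m:ℝ)*(q-p)*q^(m-1)) :=
          mul_le_mul_of_nonneg_left (pow_sub_pow_le p q hp hpq m) (by positivity)
      _ = (2*ε*A*(m:ℝ)*p^k) * q^(k+(m-1)) := by rw [hqp, pow_add]; ring
      _ ≤ (2*ε*A*(m:ℝ)*p^k) * (2*q^i) := by
          refine mul_le_mul_of_nonneg_left hqi (by positivity)
      _ = 4*ε*(A*((m:ℝ) * q^i * p^k)) := by ring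
  have step2 : ∑ i ∈ Icc (n+1) (2*n+1),
        (((2*n+1).choose i : ℝ) * (|2*(i:ℝ) - (2*n+1)| * q^i * p^(2*n+1-i)))
      ≤ ∑ i ∈ range (2*n+2),
        (((2*n+1).choose i : ℝ) * (|2*(i:ℝ) - (2*n+1)| * q^i * p^(2*n+1-i))) := by
    refine Finset.sum_le_sum_of_subset_of_nonneg ?_ ?_
    · intro i hi; simp only [mem_Icc] at hi; simp only [mem_range]; omega
    · intro i _ _; positivity
  have step3 : ∑ i ∈ range (2*n+2),
        (((2*n+1).choose i : ℝ) * (|2*(i:ℝ) - (2*n+1)| * q^i * p^(2*n+1-i)))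
      ≤ Real.sqrt (2*n+1) + 2*(2*n+1)*ε := by
    have h7 := abs_dev_le (2*n+1) q p hq hp (by linarith)
    have h8 : (4*(2*n+1)*q*p + ((2*n+1):ℝ)^2*(1-2*q)^2)
        ≤ (2*n+1) + (2*(2*n+1)*ε)^2 := by
      rw [hqdef, hpdef]
      push_cast
      nlinarith [sq_nonneg ε, (Nat.cast_nonneg n : (0:ℝ) ≤ n), mul_nonneg (Nat.cast_nonneg n : (0:ℝ) ≤ n) (sq_nonneg ε)]
    calc ∑ i ∈ range (2*n+2),
          (((2*n+1).choose i : ℝ) * (|2*(i:ℝ) - (2*n+1)| * q^i * p^(2*n+1-i)))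
        ≤ Real.sqrt (4*(2*n+1)*q*p + ((2*n+1):ℝ)^2*(1-2*q)^2) := by
          have h9 : (2*n+1)+1 = 2*n+2 := rfl
          rw [← h9]
          exact_mod_cast h7
      _ ≤ Real.sqrt ((2*n+1) + (2*(2*n+1)*ε)^2) := Real.sqrt_le_sqrt h8
      _ ≤ Real.sqrt (2*n+1) + Real.sqrt ((2*(2*n+1)*ε)^2) :=
          my_sqrt_add_le _ _ (by positivity) (by positivity)
      _ = Real.sqrt (2*n+1) + 2*(2*n+1)*ε := by
          rw [Real.sqrt_sq (by positivity)]
  have hdiff : ∑ i ∈ Icc (n+1) (2*n+1), ((2*n+1).choose i : ℝ) * p^(2*n+1-i) * q^i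
      - ∑ i ∈ Icc (n+1) (2*n+1), ((2*n+1).choose i : ℝ) * p^i * q^(2*n+1-i)
      ≤ 4*ε*(Real.sqrt (2*n+1) + 2*(2*n+1)*ε) := by
    rw [← Finset.sum_sub_distrib]
    calc ∑ i ∈ Icc (n+1) (2*n+1), (((2*n+1).choose i : ℝ) * p^(2*n+1-i) * q^i
          - ((2*n+1).choose i : ℝ) * p^i * q^(2*n+1-i))
        ≤ ∑ i ∈ Icc (n+1) (2*n+1),
            4*ε*(((2*n+1).choose i : ℝ) * (|2*(i:ℝ) - (2*n+1)| * q^i * p^(2*n+1-i))) :=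
          Finset.sum_le_sum step1
      _ = 4*ε* ∑ i ∈ Icc (n+1) (2*n+1),
            (((2*n+1).choose i : ℝ) * (|2*(i:ℝ) - (2*n+1)| * q^i * p^(2*n+1-i))) := by
          rw [Finset.mul_sum]
      _ ≤ 4*ε*(Real.sqrt (2*n+1) + 2*(2*n+1)*ε) := by
          refine mul_le_mul_of_nonneg_left (step2.trans step3) (by positivity)
  have hsplit := sum_split n p q hsum
  have hrev := head_rev n p q
  linarith


lemma tail_le_half (n : ℕ) (θ : ℝ) (h0 : 0 < θ) (h1 : θ < 1/2) :
    ∑ i ∈ Icc (n+1) (2*n+1), ((2*n+1).choose i : ℝ) * θ^i * (1-θ)^(2*n+1-i) ≤ 1/2 := by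
  set p : ℝ := θ
  set q : ℝ := 1 - θ with hqdef
  have hp : 0 ≤ p := le_of_lt h0
  have hpq : p ≤ q := by rw [hqdef]; linarith
  have hsum : p + q = 1 := by rw [hqdef]; ring
  have hterm : ∀ i ∈ Icc (n+1) (2*n+1),
      ((2*n+1).choose i : ℝ) * p^i * q^(2*n+1-i)
      ≤ ((2*n+1).choose i : ℝ) * p^(2*n+1-i) * q^i := by
    intro i hi
    simp only [mem_Icc] at hi
    set k := 2*n+1-i with hk
    set m := i - k with hm
    have e1 : p^i = p^k * p^m := by rw [show i = k + m by omega, pow_add]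
    have e2 : q^i = q^k * q^m := by rw [show i = k + m by omega, pow_add]
    rw [e1, e2]
    have hpm : p^m ≤ q^m := pow_le_pow_left₀ hp hpq m
    have hq0 : 0 ≤ q := by rw [hqdef]; linarith
    have : (0:ℝ) ≤ ((2*n+1).choose i : ℝ) * (p^k * q^k) :=
      mul_nonneg (by positivity) (mul_nonneg (pow_nonneg hp k) (pow_nonneg hq0 k))
    nlinarith [this, hpm]
  have hT : ∑ i ∈ Icc (n+1) (2*n+1), ((2*n+1).choose i : ℝ) * p^i * q^(2*n+1-i)
      ≤ ∑ i ∈ Icc (n+1) (2*n+1), ((2*n+1).choose i : ℝ) * p^(2*n+1-i) * q^i :=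
    Finset.sum_le_sum hterm
  have hsplit := sum_split n p q hsum
  have hrev := head_rev n p q
  linarith

lemma fusion_nonneg (n : ℕ) (θ : ℝ) (h0 : 0 < θ) (h1 : θ < 1/2) :
    0 ≤ (θ/(1-θ))^(2*n+1) / (1 + (θ/(1-θ))^(2*n+1)) := by
  have h2 : 0 < 1 - θ := by linarith
  positivity

lemma fusion_le (n : ℕ) (ε : ℝ) (hε : 0 < ε) (hε2 : ε < 1/2) :
    ((1/2-ε)/(1-(1/2-ε)))^(2*n+1) / (1 + ((1/2-ε)/(1-(1/2-ε)))^(2*n+1))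
      ≤ 1/(2*(2*(n:ℝ)+1)*ε) := by
  have hq : (1:ℝ) - (1/2-ε) = 1/2+ε := by ring
  rw [hq]
  set r : ℝ := (1/2-ε)/(1/2+ε) with hr
  have hq0 : (0:ℝ) < 1/2+ε := by linarith
  have hr0 : 0 ≤ r := div_nonneg (by linarith) (by linarith)
  have hr1 : r ≤ 1 - 2*ε := by
    rw [hr, div_le_iff₀ hq0]; nlinarith
  have h1 : r^(2*n+1) ≤ (1-2*ε)^(2*n+1) := pow_le_pow_left₀ hr0 hr1 _
  have h2 : 1 + ((2*n+1:ℕ):ℝ)*(2*ε) ≤ (1+2*ε)^(2*n+1) :=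
    one_add_mul_le_pow (by linarith) (2*n+1)
  have h3 : (1-2*ε)^(2*n+1) * (1+2*ε)^(2*n+1) ≤ 1 := by
    rw [← mul_pow]
    refine pow_le_one₀ (by nlinarith) (by nlinarith)
  have h4 : 0 ≤ (1-2*ε)^(2*n+1) := pow_nonneg (by linarith) _
  have h5 : (1-2*ε)^(2*n+1) * (1 + ((2*n+1:ℕ):ℝ)*(2*ε)) ≤ 1 := by
    calc (1-2*ε)^(2*n+1) * (1 + ((2*n+1:ℕ):ℝ)*(2*ε))
        ≤ (1-2*ε)^(2*n+1) * (1+2*ε)^(2*n+1) := mul_le_mul_of_nonneg_left h2 h4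
      _ ≤ 1 := h3
  have h6 : (0:ℝ) < 2*(2*(n:ℝ)+1)*ε := by positivity
  have h7 : (1-2*ε)^(2*n+1) ≤ 1/(2*(2*(n:ℝ)+1)*ε) := by
    rw [le_div_iff₀ h6]
    calc (1-2*ε)^(2*n+1) * (2*(2*(n:ℝ)+1)*ε)
        ≤ (1-2*ε)^(2*n+1) * (1 + ((2*n+1:ℕ):ℝ)*(2*ε)) := by
          refine mul_le_mul_of_nonneg_left ?_ h4
          push_cast; linarith
      _ ≤ 1 := h5
  calc r^(2*n+1) / (1 + r^(2*n+1)) ≤ r^(2*n+1) := by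
        refine div_le_self (by positivity) ?_
        nlinarith [pow_nonneg hr0 (2*n+1)]
    _ ≤ (1-2*ε)^(2*n+1) := h1
    _ ≤ 1/(2*(2*(n:ℝ)+1)*ε) := h7

lemma loss_lower (n : ℕ) (hn : 1 ≤ n) :
    ∃ θ ∈ Set.Ioo (0:ℝ) (1/2),
      1/2 - 7/Real.sqrt (Real.sqrt (2*(n:ℝ)+1)) ≤
        (∑ i ∈ Icc (n+1) (2*n+1), ((2*n+1).choose i : ℝ) * θ^i * (1-θ)^(2*n+1-i))
          - (θ/(1-θ))^(2*n+1) / (1 + (θ/(1-θ))^(2*n+1)) := by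
  have hK3 : (3:ℝ) ≤ 2*(n:ℝ)+1 := by
    have : (1:ℝ) ≤ (n:ℝ) := by exact_mod_cast hn
    linarith
  set s : ℝ := Real.sqrt (2*(n:ℝ)+1) with hsdef
  set t : ℝ := Real.sqrt s with htdef
  have hs : (1.7:ℝ) ≤ s := by
    rw [hsdef, show (1.7:ℝ) = Real.sqrt (1.7^2) from (Real.sqrt_sq (by norm_num)).symm]
    apply Real.sqrt_le_sqrt; norm_num; linarith
  have ht : (1.3:ℝ) ≤ t := by
    rw [htdef, show (1.3:ℝ) = Real.sqrt (1.3^2) from (Real.sqrt_sq (by norm_num)).symm]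
    apply Real.sqrt_le_sqrt; norm_num; linarith
  have ht0 : 0 < t := by linarith
  have ht2 : t^2 = s := Real.sq_sqrt (by rw [hsdef]; positivity)
  have ht4 : t^4 = 2*(n:ℝ)+1 := by
    have h1 : s^2 = 2*(n:ℝ)+1 := Real.sq_sqrt (by linarith)
    calc t^4 = (t^2)^2 := by ring
      _ = s^2 := by rw [ht2]
      _ = 2*(n:ℝ)+1 := h1
  set ε : ℝ := 1/t^3 with hεdef
  have hε0 : 0 < ε := by rw [hεdef]; positivity
  have hε2 : ε < 1/2 := by
    rw [hεdef, div_lt_iff₀ (by positivity)]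
    nlinarith
  refine ⟨1/2 - ε, ⟨by linarith, by linarith⟩, ?_⟩
  have htail := tail_lower n ε hε0 hε2
  have hfus := fusion_le n ε hε0 hε2
  have hrw : (1:ℝ) - (1/2 - ε) = 1/2 + ε := by ring
  rw [hrw]
  rw [hrw] at hfus
  have hE : 2*ε*(Real.sqrt (2*(n:ℝ)+1) + 2*(2*(n:ℝ)+1)*ε) + 1/(2*(2*(n:ℝ)+1)*ε)
      ≤ 7/t := by
    rw [← hsdef, ← ht2, ← ht4, hεdef]
    have htne : t ≠ 0 := ne_of_gt ht0
    field_simp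
    ring_nf
    nlinarith [ht0, ht, pow_pos ht0 3, pow_pos ht0 5, pow_pos ht0 7, pow_pos ht0 9]
  have hsq : Real.sqrt (2*(n:ℝ)+1) = Real.sqrt ((2*n:ℕ)+1) := by norm_cast
  linarith [htail, hfus, hE]



/-- Theorem 1, Equation (46): for odd `K = 2n+1`, the supremum over
`θ ∈ (0,1/2)` of the loss
`L^K(θ) = ∑_{i=n+1}^{K} C(K,i) θ^i (1-θ)^{K-i} - θ̂^K/(1+θ̂^K)` (with `θ̂ = θ/(1-θ)`)
tends to `1/2` as `K → ∞` through odd values. -/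
theorem sup_loss_tendsto_half :
    Filter.Tendsto (fun n : ℕ =>
      sSup ((fun θ : ℝ =>
        (∑ i ∈ Finset.Icc (n + 1) (2 * n + 1),
            ((2 * n + 1).choose i : ℝ) * θ ^ i * (1 - θ) ^ (2 * n + 1 - i)) -
          (θ / (1 - θ)) ^ (2 * n + 1) / (1 + (θ / (1 - θ)) ^ (2 * n + 1))) ''
        Set.Ioo (0:ℝ) (1/2)))
      Filter.atTop (nhds (1/2)) := by
  set f : ℕ → ℝ → ℝ := fun n θ =>
    (∑ i ∈ Finset.Icc (n + 1) (2 * n + 1),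
        ((2 * n + 1).choose i : ℝ) * θ ^ i * (1 - θ) ^ (2 * n + 1 - i)) -
      (θ / (1 - θ)) ^ (2 * n + 1) / (1 + (θ / (1 - θ)) ^ (2 * n + 1)) with hf
  have hle : ∀ n : ℕ, ∀ x ∈ (f n) '' Set.Ioo (0:ℝ) (1/2), x ≤ 1/2 := by
    rintro n x ⟨θ, ⟨h0, h1⟩, rfl⟩
    have := tail_le_half n θ h0 h1
    have := fusion_nonneg n θ h0 h1
    simp only [hf]
    linarith
  have hbdd : ∀ n : ℕ, BddAbove ((f n) '' Set.Ioo (0:ℝ) (1/2)) :=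
    fun n => ⟨1/2, fun x hx => hle n x hx⟩
  have hupper : ∀ n : ℕ, sSup ((f n) '' Set.Ioo (0:ℝ) (1/2)) ≤ 1/2 :=
    fun n => Real.sSup_le (hle n) (by norm_num)
  have hlower : ∀ n : ℕ, 1 ≤ n →
      1/2 - 7/Real.sqrt (Real.sqrt (2*(n:ℝ)+1)) ≤ sSup ((f n) '' Set.Ioo (0:ℝ) (1/2)) := by
    intro n hn
    obtain ⟨θ, hθ, hL⟩ := loss_lower n hn
    exact hL.trans (le_csSup (hbdd n) ⟨θ, hθ, rfl⟩)
  have htend : Filter.Tendsto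
      (fun n : ℕ => 1/2 - 7/Real.sqrt (Real.sqrt (2*(n:ℝ)+1)))
      Filter.atTop (nhds (1/2)) := by
    have h1 : Filter.Tendsto (fun n : ℕ => 2*(n:ℝ)+1) Filter.atTop Filter.atTop := by
      apply Filter.tendsto_atTop_add_const_right
      exact (tendsto_natCast_atTop_atTop (R := ℝ)).const_mul_atTop (by norm_num)
    have h2 : Filter.Tendsto (fun n : ℕ => Real.sqrt (Real.sqrt (2*(n:ℝ)+1)))
        Filter.atTop Filter.atTop := my_tendsto_sqrt.comp (my_tendsto_sqrt.comp h1)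
    have h3 : Filter.Tendsto (fun n : ℕ => 7/Real.sqrt (Real.sqrt (2*(n:ℝ)+1)))
        Filter.atTop (nhds 0) := by
      simp only [div_eq_mul_inv]
      have := h2.inv_tendsto_atTop
      have h4 := this.const_mul (7:ℝ)
      simpa using h4
    have h5 := (tendsto_const_nhds (α := ℕ) (f := Filter.atTop) (x := (1/2:ℝ))).sub h3
    simpa using h5
  refine tendsto_of_tendsto_of_tendsto_of_le_of_le' htend tendsto_const_nhds ?_ ?_
  · filter_upwards [Filter.eventually_ge_atTop 1] with n hn
    exact hlower n hn
  · filter_upwards with n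
    exact hupper n
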